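/- In a projective space P with horizon W satisfying the size condition, every proper plane (a plane not contained in W) contains a proper triangle, i.e. three pairwise collinear points not on a common line such that all three vertices and all three sides are proper. -/

import Mathlib

/-- A projective space of dimension at least 3, given by its point set `S` and its
set of lines: any two points lie on a unique line, the Veblen (Pasch) axiom holds,
and there exist two disjoint lines (dimension ≥ 3). -/
structure ProjSpace (S : Type*) where
  L : Set (Set S)
  two_points : ∀ k ∈ L, ∃ a ∈ k, ∃ b ∈ k, a ≠ b
  unique_meet : ∀ k ∈ L, ∀ l ∈ L, k ≠ l → (k ∩ l).Subsingleton
  join : ∀ a b : S, a ≠ b → ∃ k ∈ L, a ∈ k ∧ b ∈ k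
  veblen : ∀ l₁ ∈ L, ∀ l₂ ∈ L, ∀ l₃ ∈ L, ∀ l₄ ∈ L, ∀ p a b c d : S,
    l₁ ≠ l₂ → p ≠ a → p ≠ b → p ≠ c → p ≠ d →
    p ∈ l₁ → a ∈ l₁ → c ∈ l₁ → p ∈ l₂ → b ∈ l₂ → d ∈ l₂ →
    a ∈ l₃ → b ∈ l₃ → c ∈ l₄ → d ∈ l₄ → (l₃ ∩ l₄).Nonempty
  dim3 : ∃ k ∈ L, ∃ l ∈ L, k ∩ l = ∅

namespace ProjSpace

variable {S : Type*}

/-- A subspace: any line through two of its points is contained in it. -/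
def IsSubspace (P : ProjSpace S) (X : Set S) : Prop :=
  ∀ k ∈ P.L, ∀ a ∈ k, ∀ b ∈ k, a ≠ b → a ∈ X → b ∈ X → k ⊆ X

/-- The subspace spanned by a point set. -/
def span (P : ProjSpace S) (X : Set S) : Set S :=
  ⋂₀ {Y | P.IsSubspace Y ∧ X ⊆ Y}

/-- A plane: the span of a line together with a point outside it. -/
def IsPlane (P : ProjSpace S) (Pl : Set S) : Prop :=
  ∃ k ∈ P.L, ∃ a, a ∉ k ∧ Pl = P.span (insert a k)

/-- `HasIndex P W lam`: some line has exactly `lam` points in `W` and every line not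
contained in `W` has at most `lam` points in `W`. -/
def HasIndex (P : ProjSpace S) (W : Set S) (lam : ℕ) : Prop :=
  (∃ k ∈ P.L, (k ∩ W).encard = (lam : ℕ∞)) ∧
    ∀ k ∈ P.L, ¬ k ⊆ W → (k ∩ W).encard ≤ (lam : ℕ∞)

/-- Three lines form a triangle: pairwise distinct, pairwise intersecting,
not concurrent. -/
def LineTriangle (P : ProjSpace S) (k₁ k₂ k₃ : Set S) : Prop :=
  k₁ ∈ P.L ∧ k₂ ∈ P.L ∧ k₃ ∈ P.L ∧ k₁ ≠ k₂ ∧ k₁ ≠ k₃ ∧ k₂ ≠ k₃ ∧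
    (k₁ ∩ k₂).Nonempty ∧ (k₁ ∩ k₃).Nonempty ∧ (k₂ ∩ k₃).Nonempty ∧
    ¬ (k₁ ∩ k₂ ∩ k₃).Nonempty

/-- Parallelism w.r.t. the horizon `W`: the lines meet, and only inside `W`. -/
def Par (W : Set S) (k₁ k₂ : Set S) : Prop :=
  (k₁ ∩ k₂).Nonempty ∧ k₁ ∩ k₂ ⊆ W

end ProjSpace


open ProjSpace in
private lemma ProjSpace.line_unique' {S : Type*} (P : ProjSpace S) {l₁ l₂ : Set S} {a b : S}
    (h₁ : l₁ ∈ P.L) (h₂ : l₂ ∈ P.L) (ha₁ : a ∈ l₁) (hb₁ : b ∈ l₁)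
    (ha₂ : a ∈ l₂) (hb₂ : b ∈ l₂) (hab : a ≠ b) : l₁ = l₂ := by
  by_contra h
  exact hab (P.unique_meet l₁ h₁ l₂ h₂ h ⟨ha₁, ha₂⟩ ⟨hb₁, hb₂⟩)

open ProjSpace in
private lemma ProjSpace.span_subspace' {S : Type*} (P : ProjSpace S) (X : Set S) :
    P.IsSubspace (P.span X) := by
  intro k hk a ha b hb hab haX hbX p hp Y hY
  exact hY.1 k hk a ha b hb hab (haX Y hY) (hbX Y hY) hp

open ProjSpace in
private lemma ProjSpace.subset_span' {S : Type*} (P : ProjSpace S) (X : Set S) :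
    X ⊆ P.span X :=
  fun _ hx _ hY => hY.2 hx

open ProjSpace in
private lemma ProjSpace.exists_point' {S : Type*} (P : ProjSpace S) (W : Set S) (lam : ℕ)
    (hind : P.HasIndex W lam) (hsize : ∀ k ∈ P.L, 2 * (lam : ℕ∞) + 2 ≤ k.encard)
    {l : Set S} (hl : l ∈ P.L) (hns : ¬ l ⊆ W) (x : S) :
    ∃ b ∈ l, b ∉ W ∧ b ≠ x := by
  have h1 := Set.encard_diff_add_encard_inter l W
  have key : (lam : ℕ∞) + 2 + lam ≤ (l \ W).encard + lam := by
    calc (lam : ℕ∞) + 2 + lam = 2 * lam + 2 := by ring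
    _ ≤ l.encard := hsize l hl
    _ = (l \ W).encard + (l ∩ W).encard := h1.symm
    _ ≤ (l \ W).encard + lam := add_le_add le_rfl (hind.2 l hl hns)
  have h4 : (lam : ℕ∞) + 2 ≤ (l \ W).encard :=
    (WithTop.add_le_add_iff_right (by exact_mod_cast ENat.coe_ne_top lam)).mp key
  have h5 : (1 : ℕ∞) < (l \ W).encard :=
    lt_of_lt_of_le (by norm_num) (le_trans le_add_self h4)
  obtain ⟨b, hb, hbx⟩ := Set.exists_ne_of_one_lt_encard h5 x
  exact ⟨b, hb.1, hb.2, hbx⟩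

open ProjSpace in
/-- every proper plane contains a proper triangle: three pairwise distinct
proper points of the plane not on a common line, all lines through two of them being
proper. -/
theorem proper_triangle_on_proper_plane {S : Type*} (P : ProjSpace S) (W : Set S)
    (lam : ℕ) (hlam : 0 < lam) (hind : P.HasIndex W lam)
    (hsize : ∀ k ∈ P.L, 2 * (lam : ℕ∞) + 2 ≤ k.encard)
    (Pl : Set S) (hPl : P.IsPlane Pl) (hprop : ¬ Pl ⊆ W) :
    ∃ a b c : S, a ∈ Pl ∧ b ∈ Pl ∧ c ∈ Pl ∧
      a ∉ W ∧ b ∉ W ∧ c ∉ W ∧ a ≠ b ∧ a ≠ c ∧ b ≠ c ∧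
      (∀ l ∈ P.L, ¬ (a ∈ l ∧ b ∈ l ∧ c ∈ l)) ∧
      (∀ l ∈ P.L, ((a ∈ l ∧ b ∈ l) ∨ (a ∈ l ∧ c ∈ l) ∨ (b ∈ l ∧ c ∈ l)) →
        ¬ l ⊆ W) := by
  obtain ⟨k₀, hk₀, a₀, ha₀, hPleq⟩ := hPl
  have hPlsub : P.IsSubspace Pl := by rw [hPleq]; exact P.span_subspace' _
  have hins : insert a₀ k₀ ⊆ Pl := by rw [hPleq]; exact P.subset_span' _
  have ha₀Pl : a₀ ∈ Pl := hins (Set.mem_insert _ _)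
  have hk₀Pl : k₀ ⊆ Pl := fun p hp => hins (Set.mem_insert_of_mem _ hp)
  obtain ⟨x, hxPl, hxW⟩ := Set.not_subset.mp hprop
  have hk : ∃ k ∈ P.L, k ⊆ Pl ∧ x ∉ k := by
    by_cases hx : x ∈ k₀
    · obtain ⟨u, hu, v, hv, huv⟩ := P.two_points k₀ hk₀
      obtain ⟨w, hw, hwx⟩ : ∃ w ∈ k₀, w ≠ x := by
        by_cases h : u = x
        · exact ⟨v, hv, fun hvx => huv (h.trans hvx.symm)⟩
        · exact ⟨u, hu, h⟩
      have ha₀w : a₀ ≠ w := fun h => ha₀ (h ▸ hw)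
      obtain ⟨k, hkL, ha₀k, hwk⟩ := P.join a₀ w ha₀w
      refine ⟨k, hkL, hPlsub k hkL a₀ ha₀k w hwk ha₀w ha₀Pl (hk₀Pl hw), fun hxk => ?_⟩
      have hkk : k = k₀ := P.line_unique' hkL hk₀ hxk hwk hx hw (Ne.symm hwx)
      exact ha₀ (hkk ▸ ha₀k)
    · exact ⟨k₀, hk₀, hk₀Pl, hx⟩
  obtain ⟨k, hkL, hkPl, hxk⟩ := hk
  obtain ⟨u, hu, v, hv, huv⟩ := P.two_points k hkL
  have hxu : x ≠ u := fun h => hxk (h ▸ hu)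
  have hxv : x ≠ v := fun h => hxk (h ▸ hv)
  obtain ⟨mu, hmuL, hxmu, humu⟩ := P.join x u hxu
  obtain ⟨mv, hmvL, hxmv, hvmv⟩ := P.join x v hxv
  have hmuPl : mu ⊆ Pl := hPlsub mu hmuL x hxmu u humu hxu hxPl (hkPl hu)
  have hmvPl : mv ⊆ Pl := hPlsub mv hmvL x hxmv v hvmv hxv hxPl (hkPl hv)
  have hmune : mu ≠ mv := by
    intro h
    have hmk : mu = k := P.line_unique' hmuL hkL humu (h ▸ hvmv) hu hv huv
    exact hxk (hmk ▸ hxmu)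
  have hmuW : ¬ mu ⊆ W := fun h => hxW (h hxmu)
  have hmvW : ¬ mv ⊆ W := fun h => hxW (h hxmv)
  obtain ⟨b, hbmu, hbW, hbx⟩ := P.exists_point' W lam hind hsize hmuL hmuW x
  obtain ⟨c, hcmv, hcW, hcx⟩ := P.exists_point' W lam hind hsize hmvL hmvW x
  have hbc : b ≠ c := fun h =>
    hbx (P.unique_meet mu hmuL mv hmvL hmune ⟨hbmu, h ▸ hcmv⟩ ⟨hxmu, hxmv⟩)
  refine ⟨x, b, c, hxPl, hmuPl hbmu, hmvPl hcmv, hxW, hbW, hcW,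
    Ne.symm hbx, Ne.symm hcx, hbc, ?_, ?_⟩
  · rintro l hl ⟨hxl, hbl, hcl⟩
    have h1 : l = mu := P.line_unique' hl hmuL hxl hbl hxmu hbmu (Ne.symm hbx)
    have h2 : l = mv := P.line_unique' hl hmvL hxl hcl hxmv hcmv (Ne.symm hcx)
    exact hmune (h1.symm.trans h2)
  · rintro l _ (⟨hal, _⟩ | ⟨hal, _⟩ | ⟨hbl, _⟩) hlW
    · exact hxW (hlW hal)
    · exact hxW (hlW hal)
    · exact hbW (hlW hbl)
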